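/- If G is a finite simple graph containing exactly k triangles, then the Carathéodory number of G with respect to Δ-convexity is at most k + 1. -/

import Mathlib

variable {V : Type*}

/-- `S` is Δ-convex: no vertex outside `S` is adjacent to two adjacent vertices of `S`. -/
def DeltaConvex (G : SimpleGraph V) (S : Set V) : Prop :=
  ∀ ⦃w u v : V⦄, u ∈ S → v ∈ S → G.Adj u v → G.Adj w u → G.Adj w v → w ∈ S

/-- The Δ-convex hull of `S`: the smallest Δ-convex set containing `S`. -/
def deltaHull (G : SimpleGraph V) (S : Set V) : Set V :=
  ⋂₀ {T : Set V | S ⊆ T ∧ DeltaConvex G T}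

/-- `S` is Carathéodory independent for Δ-convexity. -/
def CIndep [DecidableEq V] (G : SimpleGraph V) (S : Finset V) : Prop :=
  ∃ p ∈ deltaHull G ↑S, ∀ a ∈ S, p ∉ deltaHull G ↑(S.erase a)

/-- The Carathéodory number of `G` for Δ-convexity. -/
noncomputable def deltaCaratheodoryNumber [DecidableEq V] [Fintype V]
    (G : SimpleGraph V) : ℕ :=
  sSup {n : ℕ | ∃ S : Finset V, CIndep G S ∧ S.card = n}

/-- Inductive characterization of the Δ-hull. -/
inductive Gen (G : SimpleGraph V) (S : Set V) : V → Prop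
  | base {a : V} : a ∈ S → Gen G S a
  | step {w u v : V} : Gen G S u → Gen G S v → G.Adj u v → G.Adj w u → G.Adj w v → Gen G S w

lemma gen_subset_hull {G : SimpleGraph V} {S : Set V} {x : V} (hx : Gen G S x) :
    x ∈ deltaHull G S := by
  induction hx with
  | base h' => exact fun T hT => hT.1 h'
  | step hu hv a b c ihu ihv => exact fun T hT => hT.2 (ihu T hT) (ihv T hT) a b c

lemma hull_subset_gen {G : SimpleGraph V} {S : Set V} {x : V} (hx : x ∈ deltaHull G S) :
    Gen G S x := by
  have hmem : {y | Gen G S y} ∈ {T : Set V | S ⊆ T ∧ DeltaConvex G T} :=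
    ⟨fun a ha => Gen.base ha, fun w u v hu hv a b c => Gen.step hu hv a b c⟩
  exact hx _ hmem

lemma hull_mono {G : SimpleGraph V} {S T : Set V} (h : S ⊆ T) :
    deltaHull G S ⊆ deltaHull G T := by
  intro x hx A hA
  exact hx A ⟨h.trans hA.1, hA.2⟩

/-- A derivation datum: each vertex of `D` outside `S` is derived from a triangle whose two
other vertices lie in `D` and have smaller rank. -/
def GoodProps (G : SimpleGraph V) (S : Set V) (D : Finset V) (σ : V → V × V) (r : V → ℕ) :
    Prop :=
  ∀ w ∈ D, w ∉ S → (σ w).1 ∈ D ∧ (σ w).2 ∈ D ∧ r (σ w).1 < r w ∧ r (σ w).2 < r w ∧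
    G.Adj (σ w).1 (σ w).2 ∧ G.Adj w (σ w).1 ∧ G.Adj w (σ w).2

lemma merge_good [DecidableEq V] {G : SimpleGraph V} {S : Set V} {Du Dv : Finset V}
    {σu σv : V → V × V} {ru rv : V → ℕ}
    (hu : GoodProps G S Du σu ru) (hv : GoodProps G S Dv σv rv) :
    ∃ σ r, GoodProps G S (Du ∪ Dv) σ r := by
  classical
  set M := Du.sup ru with hM
  refine ⟨fun x => if x ∈ Du then σu x else σv x,
          fun x => if x ∈ Du then ru x else rv x + M + 1, ?_⟩
  intro w hw hws
  by_cases hwu : w ∈ Du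
  · obtain ⟨h1, h2, h3, h4, h5, h6, h7⟩ := hu w hwu hws
    simp only [if_pos hwu, if_pos h1, if_pos h2]
    exact ⟨Finset.mem_union_left _ h1, Finset.mem_union_left _ h2, h3, h4, h5, h6, h7⟩
  · have hwv : w ∈ Dv := by
      rcases Finset.mem_union.mp hw with h | h
      · exact absurd h hwu
      · exact h
    obtain ⟨h1, h2, h3, h4, h5, h6, h7⟩ := hv w hwv hws
    simp only [if_neg hwu]
    refine ⟨Finset.mem_union_right _ h1, Finset.mem_union_right _ h2, ?_, ?_, h5, h6, h7⟩
    · by_cases hs : (σv w).1 ∈ Du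
      · have := Finset.le_sup (f := ru) hs
        simp only [if_pos hs]; omega
      · simp only [if_neg hs]; omega
    · by_cases hs : (σv w).2 ∈ Du
      · have := Finset.le_sup (f := ru) hs
        simp only [if_pos hs]; omega
      · simp only [if_neg hs]; omega

lemma gen_good [DecidableEq V] {G : SimpleGraph V} {S : Set V} {p : V} (hp : Gen G S p) :
    ∃ (D : Finset V) (σ : V → V × V) (r : V → ℕ), p ∈ D ∧ GoodProps G S D σ r := by
  classical
  induction hp with
  | @base a h =>
    refine ⟨{a}, fun _ => (a, a), fun _ => 0, Finset.mem_singleton_self _, ?_⟩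
    intro w hw hws
    rw [Finset.mem_singleton] at hw
    exact absurd (hw ▸ h) hws
  | @step w u v hu hv hadj hwu hwv ihu ihv =>
    obtain ⟨Du, σu, ru, hpu, hgu⟩ := ihu
    obtain ⟨Dv, σv, rv, hpv, hgv⟩ := ihv
    obtain ⟨σ, r, hg⟩ := merge_good hgu hgv
    by_cases hw : w ∈ Du ∪ Dv
    · exact ⟨Du ∪ Dv, σ, r, hw, hg⟩
    · refine ⟨insert w (Du ∪ Dv), Function.update σ w (u, v),
        Function.update r w ((Du ∪ Dv).sup r + 1), Finset.mem_insert_self _ _, ?_⟩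
      intro x hx hxs
      rcases Finset.mem_insert.mp hx with hxw | hxD
      · subst hxw
        have hu' : u ∈ Du ∪ Dv := Finset.mem_union_left _ hpu
        have hv' : v ∈ Du ∪ Dv := Finset.mem_union_right _ hpv
        have hune : u ≠ x := fun h => hw (h ▸ hu')
        have hvne : v ≠ x := fun h => hw (h ▸ hv')
        rw [Function.update_self]
        refine ⟨Finset.mem_insert_of_mem hu', Finset.mem_insert_of_mem hv', ?_, ?_,
          hadj, hwu, hwv⟩
        · rw [Function.update_self, Function.update_of_ne hune]
          have := Finset.le_sup (f := r) hu'; omega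
        · rw [Function.update_self, Function.update_of_ne hvne]
          have := Finset.le_sup (f := r) hv'; omega
      · have hxw : x ≠ w := fun h => hw (h ▸ hxD)
        obtain ⟨h1, h2, h3, h4, h5, h6, h7⟩ := hg x hxD hxs
        have h1w : (σ x).1 ≠ w := fun h => hw (h ▸ h1)
        have h2w : (σ x).2 ≠ w := fun h => hw (h ▸ h2)
        rw [Function.update_of_ne hxw, Function.update_of_ne hxw,
          Function.update_of_ne h1w, Function.update_of_ne h2w]
        exact ⟨Finset.mem_insert_of_mem h1, Finset.mem_insert_of_mem h2, h3, h4, h5, h6, h7⟩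

lemma prune_good [DecidableEq V] {G : SimpleGraph V} {S : Set V} {p : V} :
    ∀ (n : ℕ) (D : Finset V) (σ : V → V × V) (r : V → ℕ), D.card ≤ n → p ∈ D →
      GoodProps G S D σ r →
      ∃ (D' : Finset V) (σ' : V → V × V) (r' : V → ℕ), p ∈ D' ∧ GoodProps G S D' σ' r' ∧
        ∀ d ∈ D', d ≠ p → ∃ w ∈ D', w ∉ S ∧ (d = (σ' w).1 ∨ d = (σ' w).2) := by
  classical
  intro n
  induction n with
  | zero =>
    intro D σ r hcard hp _
    have := Finset.card_pos.mpr ⟨p, hp⟩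
    omega
  | succ n ih =>
    intro D σ r hcard hp hgood
    by_cases h : ∀ d ∈ D, d ≠ p → ∃ w ∈ D, w ∉ S ∧ (d = (σ w).1 ∨ d = (σ w).2)
    · exact ⟨D, σ, r, hp, hgood, h⟩
    · push_neg at h
      obtain ⟨d, hd, hdp, hnot⟩ := h
      have hp' : p ∈ D.erase d := Finset.mem_erase.mpr ⟨fun h => hdp h.symm, hp⟩
      have hcard' : (D.erase d).card ≤ n := by
        have := Finset.card_erase_of_mem hd
        omega
      refine ih (D.erase d) σ r hcard' hp' ?_
      intro w hw hws
      have hwD : w ∈ D := Finset.mem_of_mem_erase hw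
      obtain ⟨h1, h2, h3, h4, h5, h6, h7⟩ := hgood w hwD hws
      obtain ⟨hnd1, hnd2⟩ := hnot w hwD hws
      exact ⟨Finset.mem_erase.mpr ⟨fun h => hnd1 h.symm, h1⟩,
             Finset.mem_erase.mpr ⟨fun h => hnd2 h.symm, h2⟩, h3, h4, h5, h6, h7⟩

lemma good_gen {G : SimpleGraph V} {S : Set V} {D : Finset V} {σ : V → V × V} {r : V → ℕ}
    (h : GoodProps G S D σ r) : ∀ (n : ℕ) (x : V), x ∈ D → r x ≤ n → Gen G (↑D ∩ S) x := by
  intro n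
  induction n with
  | zero =>
    intro x hx hr
    by_cases hxs : x ∈ S
    · exact Gen.base ⟨hx, hxs⟩
    · obtain ⟨_, _, h3, _, _, _, _⟩ := h x hx hxs
      omega
  | succ n ih =>
    intro x hx hr
    by_cases hxs : x ∈ S
    · exact Gen.base ⟨hx, hxs⟩
    · obtain ⟨h1, h2, h3, h4, h5, h6, h7⟩ := h x hx hxs
      exact Gen.step (ih _ h1 (by omega)) (ih _ h2 (by omega)) h5 h6 h7

lemma tri_card [DecidableEq V] [Fintype V] {G : SimpleGraph V} [DecidableRel G.Adj]
    {S : Set V} [DecidablePred (· ∈ S)] {D : Finset V} {σ : V → V × V} {r : V → ℕ}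
    (hgood : GoodProps G S D σ r) :
    (D.filter (fun x => x ∉ S)).card ≤ (G.cliqueFinset 3).card := by
  apply Finset.card_le_card_of_injOn (fun w => ({w, (σ w).1, (σ w).2} : Finset V))
  · intro w hw
    rw [Finset.mem_coe, Finset.mem_filter] at hw
    obtain ⟨h1, h2, h3, h4, h5, h6, h7⟩ := hgood w hw.1 hw.2
    rw [Finset.mem_coe, SimpleGraph.mem_cliqueFinset_iff, SimpleGraph.is3Clique_triple_iff]
    exact ⟨h6, h7, h5⟩
  · intro w hw w' hw' heq
    rw [Finset.mem_coe, Finset.mem_filter] at hw hw'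
    obtain ⟨_, _, h3, h4, _, _, _⟩ := hgood w hw.1 hw.2
    obtain ⟨_, _, h3', h4', _, _, _⟩ := hgood w' hw'.1 hw'.2
    by_contra hne
    have heq2 : ({w, (σ w).1, (σ w).2} : Finset V) = {w', (σ w').1, (σ w').2} := heq
    have hw'mem : w' ∈ ({w, (σ w).1, (σ w).2} : Finset V) := by
      rw [heq2]; exact Finset.mem_insert_self _ _
    have hwmem : w ∈ ({w', (σ w').1, (σ w').2} : Finset V) := by
      rw [← heq2]; exact Finset.mem_insert_self _ _
    have hlt1 : r w' < r w := by
      rcases Finset.mem_insert.mp hw'mem with h | h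
      · exact absurd h (Ne.symm hne)
      · rcases Finset.mem_insert.mp h with h | h
        · rw [h]; exact h3
        · rw [Finset.mem_singleton] at h; rw [h]; exact h4
    have hlt2 : r w < r w' := by
      rcases Finset.mem_insert.mp hwmem with h | h
      · exact absurd h hne
      · rcases Finset.mem_insert.mp h with h | h
        · rw [h]; exact h3'
        · rw [Finset.mem_singleton] at h; rw [h]; exact h4'
    omega

lemma count_good [DecidableEq V] {S : Set V} [DecidablePred (· ∈ S)]
    {p : V} {D : Finset V} {σ : V → V × V}
    (hmin : ∀ d ∈ D, d ≠ p → ∃ w ∈ D, w ∉ S ∧ (d = (σ w).1 ∨ d = (σ w).2)) :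
    (D.filter (fun x => x ∈ S)).card ≤ (D.filter (fun x => x ∉ S)).card + 1 := by
  classical
  set I := D.filter (fun x => x ∉ S) with hI
  have hsub : D ⊆ insert p (I.biUnion fun w => {(σ w).1, (σ w).2}) := by
    intro d hd
    by_cases hdp : d = p
    · exact hdp ▸ Finset.mem_insert_self _ _
    · obtain ⟨w, hw, hws, hor⟩ := hmin d hd hdp
      apply Finset.mem_insert_of_mem
      apply Finset.mem_biUnion.mpr
      refine ⟨w, Finset.mem_filter.mpr ⟨hw, hws⟩, ?_⟩
      rcases hor with h | h
      · rw [h]; exact Finset.mem_insert_self _ _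
      · rw [h]; exact Finset.mem_insert_of_mem (Finset.mem_singleton_self _)
  have hb : (I.biUnion fun w => {(σ w).1, (σ w).2}).card ≤ 2 * I.card := by
    calc (I.biUnion fun w => {(σ w).1, (σ w).2}).card
        ≤ ∑ w ∈ I, ({(σ w).1, (σ w).2} : Finset V).card := Finset.card_biUnion_le
      _ ≤ ∑ _w ∈ I, 2 := Finset.sum_le_sum fun w _ => Finset.card_insert_le _ _ |>.trans
          (by simp)
      _ = 2 * I.card := by rw [Finset.sum_const, smul_eq_mul, mul_comm]
  have hD : D.card ≤ 2 * I.card + 1 := by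
    calc D.card ≤ (insert p (I.biUnion fun w => {(σ w).1, (σ w).2})).card :=
          Finset.card_le_card hsub
      _ ≤ (I.biUnion fun w => {(σ w).1, (σ w).2}).card + 1 := Finset.card_insert_le _ _
      _ ≤ 2 * I.card + 1 := by omega
  have hsplit : (D.filter (fun x => x ∈ S)).card + (D.filter (fun x => ¬ x ∈ S)).card
      = D.card := Finset.card_filter_add_card_filter_not _
  rw [hI] at *
  omega

theorem stmt_5 [Fintype V] [DecidableEq V] (G : SimpleGraph V)
    [DecidableRel G.Adj] (k : ℕ) (hk : (G.cliqueFinset 3).card = k) :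
    deltaCaratheodoryNumber G ≤ k + 1 := by
  classical
  apply csSup_le'
  rintro n ⟨S₀, ⟨p, hph, hpn⟩, hcard⟩
  have hgen : Gen G (↑S₀) p := hull_subset_gen hph
  obtain ⟨D₀, σ₀, r₀, hp₀, hg₀⟩ := gen_good hgen
  obtain ⟨D, σ, r, hpD, hgood, hmin⟩ := prune_good D₀.card D₀ σ₀ r₀ le_rfl hp₀ hg₀
  -- every element of S₀ is in D
  have hSD : ∀ a ∈ S₀, a ∈ D := by
    intro a ha
    by_contra haD
    apply hpn a ha
    have hgp : Gen G (↑D ∩ ↑S₀) p := good_gen hgood (r p) p hpD le_rfl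
    have hsub : (↑D ∩ ↑S₀ : Set V) ⊆ ↑(S₀.erase a) := by
      intro x ⟨hxD, hxS⟩
      rw [Finset.coe_erase]
      exact ⟨hxS, fun hxa => haD (hxa ▸ hxD)⟩
    exact hull_mono hsub (gen_subset_hull hgp)
  haveI : DecidablePred (· ∈ (↑S₀ : Set V)) := fun _ => Finset.decidableMem _ _
  have h1 : (D.filter (fun x => x ∈ (↑S₀ : Set V))).card
      ≤ (D.filter (fun x => x ∉ (↑S₀ : Set V))).card + 1 := count_good hmin
  have h2 : (D.filter (fun x => x ∉ (↑S₀ : Set V))).card ≤ k :=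
    hk ▸ tri_card hgood
  have h3 : S₀ ⊆ D.filter (fun x => x ∈ (↑S₀ : Set V)) := by
    intro a ha
    exact Finset.mem_filter.mpr ⟨hSD a ha, ha⟩
  have := Finset.card_le_card h3
  omega
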